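/- Let S be symmetric d×d, Ψ diagonal positive definite, W a d×p matrix with M = I_p + WᵀΨ⁻¹W, and suppose W satisfies W = SΨ⁻¹WM⁻¹. Then diag(S − WWᵀ) = diag(S − WM⁻¹WᵀΨ⁻¹S), where diag(A) denotes the diagonal matrix with the same diagonal as A. -/
import Mathlib


open Matrix

/-- Given the `W` fixed-point relation `W = SΨ⁻¹WM⁻¹`, the MLE and EM `Ψ`-updates
coincide: `diag(S − WWᵀ) = diag(S − WM⁻¹WᵀΨ⁻¹S)`. -/
theorem stmt_7 {d p : ℕ} (S : Matrix (Fin d) (Fin d) ℝ) (hS : S.IsSymm)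
    (ψ : Fin d → ℝ) (hψ : ∀ i, 0 < ψ i)
    (Ψ : Matrix (Fin d) (Fin d) ℝ) (hΨ : Ψ = Matrix.diagonal ψ)
    (W : Matrix (Fin d) (Fin p) ℝ)
    (M : Matrix (Fin p) (Fin p) ℝ) (hM : M = 1 + Wᵀ * Ψ⁻¹ * W)
    (hfix : W = S * Ψ⁻¹ * W * M⁻¹) :
    Matrix.diagonal (fun i => (S - W * Wᵀ) i i)
      = Matrix.diagonal (fun i => (S - W * M⁻¹ * Wᵀ * Ψ⁻¹ * S) i i) := by
  have hΨs : Ψ⁻¹ᵀ = Ψ⁻¹ := by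
    rw [transpose_nonsing_inv, hΨ, diagonal_transpose]
  have hMs : M⁻¹ᵀ = M⁻¹ := by
    rw [transpose_nonsing_inv, hM]
    congr 1
    simp [Matrix.transpose_add, Matrix.transpose_mul, hΨs, Matrix.mul_assoc]
  have hWT : Wᵀ = M⁻¹ * Wᵀ * Ψ⁻¹ * S := by
    conv_lhs => rw [hfix]
    rw [Matrix.transpose_mul, Matrix.transpose_mul, Matrix.transpose_mul,
      hMs, hΨs, hS.eq, Matrix.mul_assoc, Matrix.mul_assoc]
  have key : W * Wᵀ = W * M⁻¹ * Wᵀ * Ψ⁻¹ * S := by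
    conv_lhs => rw [hWT]
    simp [Matrix.mul_assoc]
  rw [key]
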